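/- Let T be a rooted tree in which every vertex has at most Δ children, where Δ ≥ 2, and let L(T) be the number of leaves of T. Then ρ_C(T) ≥ (L(T) − 1)/(Δ − 1), with equality if and only if T is a complete Δ-ary tree, i.e. every internal vertex has exactly Δ children and all leaves lie on the same level. -/

import Mathlib

open Matrix

/-- A rooted tree on a finite vertex type `V`, encoded by its root and the
parent function: the root is its own parent, and iterating the parent function
from any vertex eventually reaches the root.  (These conditions force the graph
whose edges join each non-root vertex to its parent to be a tree.) -/
structure TreeOn (V : Type) [Fintype V] [DecidableEq V] where
  root : V
  parent : V → V
  parent_root : parent root = root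
  reaches : ∀ v, ∃ k, parent^[k] v = root

namespace TreeOn

variable {V : Type} [Fintype V] [DecidableEq V]

/-- `u` is a (weak) ancestor of `v`: some iterate of the parent function sends
`v` to `u`.  (Any ancestor is reached within `Fintype.card V` steps, so the
bound makes the predicate decidable without changing its meaning.) -/
def IsAncestor (T : TreeOn V) (u v : V) : Prop :=
  ∃ k, k ≤ Fintype.card V ∧ T.parent^[k] v = u

instance (T : TreeOn V) (u v : V) : Decidable (T.IsAncestor u v) := by
  have h : T.IsAncestor u v ↔ ∃ k ∈ Finset.range (Fintype.card V + 1), T.parent^[k] v = u := by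
    simp [IsAncestor, Nat.lt_succ_iff]
  rw [h]; infer_instance

/-- The level of a vertex: its distance to the root. -/
def level (T : TreeOn V) (v : V) : ℕ := Nat.find (T.reaches v)

/-- The ancestral level `ℓ(v ∨ w)`: the level of the lowest common ancestor
of `v` and `w`, i.e. the greatest level of a common ancestor. -/
def lcaLevel (T : TreeOn V) (v w : V) : ℕ :=
  (Finset.univ.filter fun u => T.IsAncestor u v ∧ T.IsAncestor u w).sup T.level

/-- A leaf is a vertex with no children. -/
def IsLeaf (T : TreeOn V) (v : V) : Prop := ∀ u, T.parent u = v → u = v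

instance (T : TreeOn V) : DecidablePred T.IsLeaf := fun v =>
  inferInstanceAs (Decidable (∀ u, T.parent u = v → u = v))

/-- The type of leaves of `T`. -/
abbrev Leaf (T : TreeOn V) := {v : V // T.IsLeaf v}

/-- The ancestral matrix `C(T)`, indexed by the leaves of `T`, whose
`(v, w)` entry is the ancestral level `ℓ(v ∨ w)`. -/
noncomputable def ancMatrix (T : TreeOn V) : Matrix T.Leaf T.Leaf ℝ :=
  Matrix.of fun v w => (T.lcaLevel v.1 w.1 : ℝ)

/-- The ancestral spectral radius `ρ_C(T)`: the largest eigenvalue of `C(T)`. -/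
noncomputable def rhoC (T : TreeOn V) : ℝ :=
  sSup {μ : ℝ | ∃ x : T.Leaf → ℝ, x ≠ 0 ∧ T.ancMatrix.mulVec x = μ • x}

/-- The underlying simple graph of the tree: each non-root vertex is joined
to its parent. -/
def graph (T : TreeOn V) : SimpleGraph V :=
  SimpleGraph.fromRel fun u v => T.parent u = v ∧ u ≠ v

/-- The number of children (outdegree) of a vertex. -/
def childCount (T : TreeOn V) (v : V) : ℕ :=
  (Finset.univ.filter fun u => T.parent u = v ∧ u ≠ v).card

end TreeOn

namespace TreeOn

variable {V : Type} [Fintype V] [DecidableEq V]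

/-- A complete `d`-ary tree: every internal vertex has exactly `d` children and
all leaves lie on the same level. -/
def IsCompleteDary (T : TreeOn V) (d : ℕ) : Prop :=
  (∀ v, ¬ T.IsLeaf v → T.childCount v = d) ∧
    ∀ v w : T.Leaf, T.level v.1 = T.level w.1

end TreeOn
namespace TreeOn

variable {V : Type} [Fintype V] [DecidableEq V] (T : TreeOn V)

lemma parent_iterate_level (v : V) : T.parent^[T.level v] v = T.root :=
  Nat.find_spec (T.reaches v)

lemma level_le {k : ℕ} {v : V} (h : T.parent^[k] v = T.root) : T.level v ≤ k :=
  Nat.find_min' _ h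

lemma iterate_root (k : ℕ) : T.parent^[k] T.root = T.root :=
  Function.iterate_fixed T.parent_root k

lemma parent_eq_self_iff {v : V} : T.parent v = v ↔ v = T.root := by
  constructor
  · intro h
    obtain ⟨k, hk⟩ := T.reaches v
    rw [Function.iterate_fixed h] at hk
    exact hk
  · rintro rfl; exact T.parent_root

lemma level_root : T.level T.root = 0 :=
  Nat.le_zero.1 (T.level_le (by simp))

lemma level_eq_zero_iff {v : V} : T.level v = 0 ↔ v = T.root := by
  constructor
  · intro h
    have := T.parent_iterate_level v
    rwa [h, Function.iterate_zero_apply] at this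
  · rintro rfl; exact T.level_root

lemma iterate_of_level_le {v : V} {k : ℕ} (h : T.level v ≤ k) :
    T.parent^[k] v = T.root := by
  rw [← Nat.sub_add_cancel h, Function.iterate_add_apply, T.parent_iterate_level,
    T.iterate_root]

lemma level_iterate {v : V} {k : ℕ} (h : k ≤ T.level v) :
    T.level (T.parent^[k] v) = T.level v - k := by
  refine le_antisymm (T.level_le ?_) ?_
  · rw [← Function.iterate_add_apply, Nat.sub_add_cancel h, T.parent_iterate_level]
  · by_contra hlt
    push_neg at hlt
    have : T.parent^[T.level (T.parent^[k] v) + k] v = T.root := by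
      rw [Function.iterate_add_apply, T.parent_iterate_level]
    have := T.level_le this
    omega

lemma level_lt_card (v : V) : T.level v < Fintype.card V := by
  have hinj : Function.Injective (fun j : Fin (T.level v + 1) => T.parent^[j.1] v) := by
    intro a b hab
    have ha : T.level (T.parent^[a.1] v) = T.level v - a.1 :=
      T.level_iterate (Nat.lt_succ_iff.1 a.2)
    have hb : T.level (T.parent^[b.1] v) = T.level v - b.1 :=
      T.level_iterate (Nat.lt_succ_iff.1 b.2)
    simp only at hab
    rw [hab, hb] at ha
    have ha2 := Nat.lt_succ_iff.1 a.2
    have hb2 := Nat.lt_succ_iff.1 b.2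
    exact Fin.ext (by omega)
  have := Fintype.card_le_of_injective _ hinj
  simpa using this

lemma isAncestor_iff {u v : V} : T.IsAncestor u v ↔ ∃ k, T.parent^[k] v = u := by
  constructor
  · rintro ⟨k, _, h⟩; exact ⟨k, h⟩
  · rintro ⟨k, h⟩
    by_cases hk : k ≤ T.level v
    · exact ⟨k, hk.trans (T.level_lt_card v).le, h⟩
    · push_neg at hk
      refine ⟨T.level v, (T.level_lt_card v).le, ?_⟩
      rw [T.parent_iterate_level]
      rw [T.iterate_of_level_le hk.le] at h
      exact h

lemma isAncestor_refl (v : V) : T.IsAncestor v v :=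
  T.isAncestor_iff.2 ⟨0, rfl⟩

lemma isAncestor_root (v : V) : T.IsAncestor T.root v :=
  T.isAncestor_iff.2 ⟨T.level v, T.parent_iterate_level v⟩

lemma isAncestor_trans {u v w : V} (h1 : T.IsAncestor u v) (h2 : T.IsAncestor v w) :
    T.IsAncestor u w := by
  obtain ⟨k, hk⟩ := T.isAncestor_iff.1 h1
  obtain ⟨m, hm⟩ := T.isAncestor_iff.1 h2
  exact T.isAncestor_iff.2 ⟨k + m, by rw [Function.iterate_add_apply, hm, hk]⟩

lemma isAncestor_canon {u v : V} (h : T.IsAncestor u v) :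
    T.parent^[T.level v - T.level u] v = u := by
  obtain ⟨k, hk⟩ := T.isAncestor_iff.1 h
  by_cases hle : k ≤ T.level v
  · have := T.level_iterate hle
    rw [hk] at this
    rw [this]
    have : T.level v - (T.level v - k) = k := by omega
    rw [this, hk]
  · push_neg at hle
    rw [T.iterate_of_level_le hle.le] at hk
    rw [← hk, T.level_root, Nat.sub_zero, T.parent_iterate_level]

lemma level_le_of_isAncestor {u v : V} (h : T.IsAncestor u v) :
    T.level u ≤ T.level v := by
  rw [← T.isAncestor_canon h]
  obtain ⟨k, hk⟩ := T.isAncestor_iff.1 h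
  by_cases hle : T.level v - T.level u ≤ T.level v
  · rw [T.level_iterate hle]; omega
  · omega

lemma isAncestor_level_inj {u u' v : V} (hu : T.IsAncestor u v) (hu' : T.IsAncestor u' v)
    (h : T.level u = T.level u') : u = u' := by
  rw [← T.isAncestor_canon hu, ← T.isAncestor_canon hu', h]

lemma exists_isAncestor_of_level_le {v : V} {j : ℕ} (h : j ≤ T.level v) :
    ∃ u, T.IsAncestor u v ∧ T.level u = j := by
  refine ⟨T.parent^[T.level v - j] v, T.isAncestor_iff.2 ⟨_, rfl⟩, ?_⟩
  rw [T.level_iterate (Nat.sub_le _ _)]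
  omega

lemma isAncestor_parent (c : V) : T.IsAncestor (T.parent c) c :=
  T.isAncestor_iff.2 ⟨1, rfl⟩

end TreeOn
namespace TreeOn

variable {V : Type} [Fintype V] [DecidableEq V] (T : TreeOn V)

/-- The finset of common ancestors of `v` and `w`. -/
def commonAnc (v w : V) : Finset V :=
  Finset.univ.filter fun u => T.IsAncestor u v ∧ T.IsAncestor u w

lemma mem_commonAnc {u v w : V} :
    u ∈ T.commonAnc v w ↔ T.IsAncestor u v ∧ T.IsAncestor u w := by
  simp [commonAnc]

lemma root_mem_commonAnc (v w : V) : T.root ∈ T.commonAnc v w :=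
  T.mem_commonAnc.2 ⟨T.isAncestor_root v, T.isAncestor_root w⟩

lemma lcaLevel_eq_sup (v w : V) : T.lcaLevel v w = (T.commonAnc v w).sup T.level := rfl

lemma level_le_lcaLevel {u v w : V} (h : u ∈ T.commonAnc v w) :
    T.level u ≤ T.lcaLevel v w :=
  Finset.le_sup h

lemma image_level_commonAnc (v w : V) :
    (T.commonAnc v w).image T.level = Finset.range (T.lcaLevel v w + 1) := by
  apply Finset.ext
  intro j
  simp only [Finset.mem_image, Finset.mem_range, Nat.lt_succ_iff]
  constructor
  · rintro ⟨u, hu, rfl⟩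
    exact T.level_le_lcaLevel hu
  · intro hj
    obtain ⟨u0, hu0, hsup⟩ := Finset.exists_mem_eq_sup (T.commonAnc v w)
      ⟨T.root, T.root_mem_commonAnc v w⟩ T.level
    rw [T.lcaLevel_eq_sup] at hj
    rw [hsup] at hj
    obtain ⟨a, ha, hla⟩ := T.exists_isAncestor_of_level_le hj
    obtain ⟨h1, h2⟩ := T.mem_commonAnc.1 hu0
    exact ⟨a, T.mem_commonAnc.2 ⟨T.isAncestor_trans ha h1, T.isAncestor_trans ha h2⟩, hla⟩

lemma level_injOn_commonAnc (v w : V) :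
    Set.InjOn T.level (T.commonAnc v w : Set V) := by
  intro a ha b hb hab
  exact T.isAncestor_level_inj (T.mem_commonAnc.1 ha).1 (T.mem_commonAnc.1 hb).1 hab

lemma card_commonAnc (v w : V) : (T.commonAnc v w).card = T.lcaLevel v w + 1 := by
  rw [← Finset.card_image_of_injOn (T.level_injOn_commonAnc v w),
    T.image_level_commonAnc, Finset.card_range]

lemma card_commonAnc_erase_root (v w : V) :
    ((T.commonAnc v w).erase T.root).card = T.lcaLevel v w := by
  rw [Finset.card_erase_of_mem (T.root_mem_commonAnc v w), T.card_commonAnc]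
  omega

lemma lcaLevel_eq_sum (v w : V) :
    T.lcaLevel v w = ∑ u ∈ Finset.univ.erase T.root,
      (if T.IsAncestor u v ∧ T.IsAncestor u w then 1 else 0) := by
  rw [← T.card_commonAnc_erase_root v w]
  rw [Finset.sum_ite, Finset.sum_const, Finset.sum_const]
  have : Finset.filter (fun u => T.IsAncestor u v ∧ T.IsAncestor u w)
      (Finset.univ.erase T.root) = (T.commonAnc v w).erase T.root := by
    apply Finset.ext
    intro u
    simp [mem_commonAnc, Finset.mem_erase, and_comm, and_left_comm]
  rw [this]
  simp

lemma lcaLevel_comm (v w : V) : T.lcaLevel v w = T.lcaLevel w v := by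
  unfold lcaLevel
  congr 1
  apply Finset.filter_congr
  intro u _
  exact and_comm

lemma lcaLevel_self (v : V) : T.lcaLevel v v = T.level v := by
  apply le_antisymm
  · apply Finset.sup_le
    intro u hu
    exact T.level_le_of_isAncestor (T.mem_commonAnc.1 hu).1
  · exact T.level_le_lcaLevel (T.mem_commonAnc.2 ⟨T.isAncestor_refl v, T.isAncestor_refl v⟩)

end TreeOn
namespace TreeOn

variable {V : Type} [Fintype V] [DecidableEq V] (T : TreeOn V)

/-- The finset of children of a vertex. -/
def children (u : V) : Finset V :=
  Finset.univ.filter fun c => T.parent c = u ∧ c ≠ u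

lemma mem_children {c u : V} : c ∈ T.children u ↔ T.parent c = u ∧ c ≠ u := by
  simp [children]

lemma childCount_eq (u : V) : T.childCount u = (T.children u).card := rfl

lemma child_ne_root {c u : V} (h : c ∈ T.children u) : c ≠ T.root := by
  obtain ⟨h1, h2⟩ := T.mem_children.1 h
  intro hc
  subst hc
  rw [T.parent_root] at h1
  exact h2 h1

lemma level_child {c u : V} (h : c ∈ T.children u) : T.level c = T.level u + 1 := by
  obtain ⟨h1, h2⟩ := T.mem_children.1 h
  have hc : c ≠ T.root := T.child_ne_root h
  have hpos : 1 ≤ T.level c := by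
    rcases Nat.eq_zero_or_pos (T.level c) with h0 | h0
    · exact absurd (T.level_eq_zero_iff.1 h0) hc
    · exact h0
  have := T.level_iterate (v := c) (k := 1) hpos
  rw [Function.iterate_one, h1] at this
  omega

lemma isAncestor_of_child {c u : V} (h : c ∈ T.children u) : T.IsAncestor u c := by
  obtain ⟨h1, _⟩ := T.mem_children.1 h
  rw [← h1]
  exact T.isAncestor_parent c

lemma eq_of_isAncestor_of_isLeaf {u v : V} (hu : T.IsLeaf u) (h : T.IsAncestor u v) :
    v = u := by
  obtain ⟨k, hk⟩ := T.isAncestor_iff.1 h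
  clear h
  induction k with
  | zero => exact hk
  | succ n ih =>
    rw [Function.iterate_succ_apply'] at hk
    exact ih (hu _ hk)

lemma exists_child_isAncestor {u v : V} (h : T.IsAncestor u v) (hne : v ≠ u) :
    ∃ c ∈ T.children u, T.IsAncestor c v := by
  have hex : ∃ k, T.parent^[k] v = u := T.isAncestor_iff.1 h
  set m := Nat.find hex with hm
  have hspec : T.parent^[m] v = u := Nat.find_spec hex
  have hmpos : m ≠ 0 := by
    intro h0
    rw [h0, Function.iterate_zero_apply] at hspec
    exact hne hspec
  refine ⟨T.parent^[m - 1] v, T.mem_children.2 ⟨?_, ?_⟩, T.isAncestor_iff.2 ⟨m - 1, rfl⟩⟩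
  · have h1 : T.parent^[m - 1 + 1] v = u := by
      have : m - 1 + 1 = m := by omega
      rw [this]; exact hspec
    rw [Function.iterate_succ_apply'] at h1
    exact h1
  · intro hcon
    exact Nat.find_min hex (by omega : m - 1 < m) hcon

lemma children_unique {c c' u v : V} (hc : c ∈ T.children u) (hc' : c' ∈ T.children u)
    (hv : T.IsAncestor c v) (hv' : T.IsAncestor c' v) : c = c' :=
  T.isAncestor_level_inj hv hv' (by rw [T.level_child hc, T.level_child hc'])

/-- The number of leaves weakly below a vertex. -/
def leafCount (u : V) : ℕ :=
  (Finset.univ.filter fun v : T.Leaf => T.IsAncestor u v.1).card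

lemma leafCount_of_isLeaf {u : V} (hu : T.IsLeaf u) : T.leafCount u = 1 := by
  unfold leafCount
  rw [Finset.card_eq_one]
  refine ⟨⟨u, hu⟩, ?_⟩
  apply Finset.ext
  intro v
  simp only [Finset.mem_filter, Finset.mem_univ, true_and, Finset.mem_singleton]
  constructor
  · intro h
    exact Subtype.ext (T.eq_of_isAncestor_of_isLeaf hu h)
  · rintro rfl
    exact T.isAncestor_refl u

lemma not_isLeaf_iff {u : V} : ¬ T.IsLeaf u ↔ (T.children u).Nonempty := by
  constructor
  · intro h
    rw [IsLeaf] at h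
    push_neg at h
    obtain ⟨c, h1, h2⟩ := h
    exact ⟨c, T.mem_children.2 ⟨h1, h2⟩⟩
  · rintro ⟨c, hc⟩ hleaf
    obtain ⟨h1, h2⟩ := T.mem_children.1 hc
    exact h2 (hleaf c h1)

lemma exists_leaf_isAncestor (u : V) : ∃ v : T.Leaf, T.IsAncestor u v.1 := by
  suffices H : ∀ m (u : V), Fintype.card V - T.level u ≤ m → ∃ v : T.Leaf, T.IsAncestor u v.1 by
    exact H (Fintype.card V) u (by omega)
  intro m
  induction m with
  | zero =>
    intro u hu
    have := T.level_lt_card u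
    omega
  | succ n ih =>
    intro u hu
    by_cases hleaf : T.IsLeaf u
    · exact ⟨⟨u, hleaf⟩, T.isAncestor_refl u⟩
    · obtain ⟨c, hc⟩ := T.not_isLeaf_iff.1 hleaf
      have hlc := T.level_child hc
      have := T.level_lt_card c
      obtain ⟨v, hv⟩ := ih c (by omega)
      exact ⟨v, T.isAncestor_trans (T.isAncestor_of_child hc) hv⟩

lemma leafCount_pos (u : V) : 1 ≤ T.leafCount u := by
  obtain ⟨v, hv⟩ := T.exists_leaf_isAncestor u
  have hne : (Finset.univ.filter fun w : T.Leaf => T.IsAncestor u w.1).Nonempty :=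
    ⟨v, Finset.mem_filter.2 ⟨Finset.mem_univ _, hv⟩⟩
  have := Finset.card_pos.2 hne
  unfold leafCount
  omega

lemma leafCount_root : T.leafCount T.root = Fintype.card T.Leaf := by
  unfold leafCount
  rw [Finset.filter_true_of_mem, Finset.card_univ]
  intro v _
  exact T.isAncestor_root v.1

lemma leafCount_eq_sum_children {u : V} (hu : ¬ T.IsLeaf u) :
    T.leafCount u = ∑ c ∈ T.children u, T.leafCount c := by
  unfold leafCount
  rw [← Finset.card_biUnion]
  · congr 1
    apply Finset.ext
    intro v
    simp only [Finset.mem_filter, Finset.mem_univ, true_and, Finset.mem_biUnion]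
    constructor
    · intro h
      have hne : v.1 ≠ u := by
        intro he
        rw [← he] at hu
        exact hu v.2
      obtain ⟨c, hc, hcv⟩ := T.exists_child_isAncestor h hne
      exact ⟨c, hc, hcv⟩
    · rintro ⟨c, hc, hcv⟩
      exact T.isAncestor_trans (T.isAncestor_of_child hc) hcv
  · intro c hc c' hc' hne
    apply Finset.disjoint_left.2
    intro v hv hv'
    simp only [Finset.mem_filter, Finset.mem_univ, true_and] at hv hv'
    exact hne (T.children_unique hc hc' hv hv')

lemma children_eq_fiber (u : V) :
    T.children u = (Finset.univ.erase T.root).filter fun c => T.parent c = u := by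
  apply Finset.ext
  intro c
  simp only [mem_children, Finset.mem_filter, Finset.mem_erase, Finset.mem_univ, true_and,
    and_true]
  constructor
  · rintro ⟨h1, h2⟩
    refine ⟨?_, h1⟩
    intro hc
    subst hc
    rw [T.parent_root] at h1
    exact h2 h1
  · rintro ⟨h1, h2⟩
    refine ⟨h2, ?_⟩
    intro hc
    subst hc
    exact h1 (T.parent_eq_self_iff.1 h2)

lemma parent_not_isLeaf {c : V} (hc : c ≠ T.root) : ¬ T.IsLeaf (T.parent c) := by
  intro hleaf
  have := hleaf c rfl
  exact hc ((T.parent_eq_self_iff).1 this.symm)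

/-- Group a sum over non-root vertices by parents (which are internal vertices). -/
lemma sum_erase_root_eq (f : V → ℝ) :
    ∑ c ∈ Finset.univ.erase T.root, f c =
      ∑ u ∈ Finset.univ.filter (fun u => ¬ T.IsLeaf u), ∑ c ∈ T.children u, f c := by
  rw [← Finset.sum_fiberwise_of_maps_to (g := T.parent)
    (t := Finset.univ.filter fun u => ¬ T.IsLeaf u) ?_ f]
  · apply Finset.sum_congr rfl
    intro u _
    rw [T.children_eq_fiber u]
  · intro c hc
    simp only [Finset.mem_erase, Finset.mem_univ, and_true] at hc
    simp [T.parent_not_isLeaf hc]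

end TreeOn
namespace TreeOn

variable {V : Type} [Fintype V] [DecidableEq V] (T : TreeOn V)

lemma sum_indicator_leaves (u : V) :
    ∑ v : T.Leaf, (if T.IsAncestor u v.1 then (1 : ℝ) else 0) = T.leafCount u := by
  rw [leafCount, Finset.card_filter]
  push_cast
  rfl

lemma sum_sum_ancMatrix :
    ∑ v : T.Leaf, ∑ w : T.Leaf, T.ancMatrix v w =
      ∑ u ∈ Finset.univ.erase T.root, (T.leafCount u : ℝ) ^ 2 := by
  have hentry : ∀ v w : T.Leaf, T.ancMatrix v w = ∑ u ∈ Finset.univ.erase T.root,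
      (if T.IsAncestor u v.1 then (1 : ℝ) else 0) *
        (if T.IsAncestor u w.1 then (1 : ℝ) else 0) := by
    intro v w
    show ((T.lcaLevel v.1 w.1 : ℕ) : ℝ) = _
    rw [T.lcaLevel_eq_sum v.1 w.1]
    push_cast
    apply Finset.sum_congr rfl
    intro u _
    by_cases h1 : T.IsAncestor u v.1 <;> by_cases h2 : T.IsAncestor u w.1 <;>
      simp [h1, h2]
  simp_rw [hentry]
  calc ∑ v : T.Leaf, ∑ w : T.Leaf, ∑ u ∈ Finset.univ.erase T.root,
        (if T.IsAncestor u v.1 then (1:ℝ) else 0) * (if T.IsAncestor u w.1 then (1:ℝ) else 0)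
      = ∑ v : T.Leaf, ∑ u ∈ Finset.univ.erase T.root, ∑ w : T.Leaf,
        (if T.IsAncestor u v.1 then (1:ℝ) else 0) * (if T.IsAncestor u w.1 then (1:ℝ) else 0) :=
        Finset.sum_congr rfl fun v _ => Finset.sum_comm
    _ = ∑ u ∈ Finset.univ.erase T.root, ∑ v : T.Leaf, ∑ w : T.Leaf,
        (if T.IsAncestor u v.1 then (1:ℝ) else 0) * (if T.IsAncestor u w.1 then (1:ℝ) else 0) :=
        Finset.sum_comm
    _ = ∑ u ∈ Finset.univ.erase T.root, (∑ v : T.Leaf, if T.IsAncestor u v.1 then (1:ℝ) else 0) *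
        (∑ w : T.Leaf, if T.IsAncestor u w.1 then (1:ℝ) else 0) :=
        Finset.sum_congr rfl fun u _ => (Finset.sum_mul_sum _ _ _ _).symm
    _ = ∑ u ∈ Finset.univ.erase T.root, (T.leafCount u : ℝ) ^ 2 := by
        apply Finset.sum_congr rfl
        intro u _
        rw [T.sum_indicator_leaves u, sq]

/-- Sum over internal vertices. -/
lemma sum_internal_eq :
    ∑ u ∈ Finset.univ.filter (fun u => ¬ T.IsLeaf u), (T.leafCount u : ℝ) ^ 2 =
      (∑ u ∈ Finset.univ.erase T.root, (T.leafCount u : ℝ) ^ 2) +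
        (Fintype.card T.Leaf : ℝ) ^ 2 - Fintype.card T.Leaf := by
  have h1 : ∑ u : V, (T.leafCount u : ℝ) ^ 2 =
      (∑ u ∈ Finset.univ.erase T.root, (T.leafCount u : ℝ) ^ 2) +
        (Fintype.card T.Leaf : ℝ) ^ 2 := by
    rw [← Finset.sum_erase_add _ _ (Finset.mem_univ T.root), T.leafCount_root]
  have h2 : ∑ u : V, (T.leafCount u : ℝ) ^ 2 =
      (∑ u ∈ Finset.univ.filter (fun u => T.IsLeaf u), (T.leafCount u : ℝ) ^ 2) +
        ∑ u ∈ Finset.univ.filter (fun u => ¬ T.IsLeaf u), (T.leafCount u : ℝ) ^ 2 :=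
    (Finset.sum_filter_add_sum_filter_not _ _ _).symm
  have h3 : ∑ u ∈ Finset.univ.filter (fun u => T.IsLeaf u), (T.leafCount u : ℝ) ^ 2 =
      (Fintype.card T.Leaf : ℝ) := by
    have hone : ∀ u ∈ Finset.univ.filter (fun u => T.IsLeaf u), (T.leafCount u : ℝ) ^ 2 = 1 := by
      intro u hu
      rw [T.leafCount_of_isLeaf (Finset.mem_filter.1 hu).2]
      norm_num
    rw [Finset.sum_congr rfl hone, Finset.sum_const, nsmul_eq_mul, mul_one, Fintype.card_subtype]
  rw [h3] at h2
  rw [h1] at h2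
  linarith

lemma per_vertex_ineq {Δ : ℕ} (hdeg : ∀ v, T.childCount v ≤ Δ) {u : V}
    (hu : ¬ T.IsLeaf u) :
    (T.leafCount u : ℝ) ^ 2 ≤ (Δ : ℝ) * ∑ c ∈ T.children u, (T.leafCount c : ℝ) ^ 2 := by
  have hsum : (T.leafCount u : ℝ) = ∑ c ∈ T.children u, (T.leafCount c : ℝ) := by
    rw [T.leafCount_eq_sum_children hu]
    push_cast
    rfl
  rw [hsum]
  calc (∑ c ∈ T.children u, (T.leafCount c : ℝ)) ^ 2
      ≤ (T.children u).card * ∑ c ∈ T.children u, (T.leafCount c : ℝ) ^ 2 :=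
        sq_sum_le_card_mul_sum_sq
    _ ≤ (Δ : ℝ) * ∑ c ∈ T.children u, (T.leafCount c : ℝ) ^ 2 := by
        apply mul_le_mul_of_nonneg_right
        · have h := hdeg u
          rw [T.childCount_eq] at h
          exact_mod_cast h
        · apply Finset.sum_nonneg
          intro c _
          positivity

lemma main_lower_bound {Δ : ℕ} (hΔ : 2 ≤ Δ) (hdeg : ∀ v, T.childCount v ≤ Δ) :
    (Fintype.card T.Leaf : ℝ) ^ 2 - Fintype.card T.Leaf ≤
      ((Δ : ℝ) - 1) * ∑ u ∈ Finset.univ.erase T.root, (T.leafCount u : ℝ) ^ 2 := by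
  have hgroup := T.sum_erase_root_eq (fun c => (T.leafCount c : ℝ) ^ 2)
  have hstep : ∑ u ∈ Finset.univ.filter (fun u => ¬ T.IsLeaf u), (T.leafCount u : ℝ) ^ 2 ≤
      (Δ : ℝ) * ∑ u ∈ Finset.univ.erase T.root, (T.leafCount u : ℝ) ^ 2 := by
    rw [hgroup, Finset.mul_sum]
    apply Finset.sum_le_sum
    intro u hu
    exact T.per_vertex_ineq hdeg (Finset.mem_filter.1 hu).2
  have := T.sum_internal_eq
  linarith

lemma sum_sq_diff {α : Type*} [DecidableEq α] (s : Finset α) (f : α → ℝ) :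
    ∑ i ∈ s, ∑ j ∈ s, (f i - f j) ^ 2 =
      2 * ((s.card : ℝ) * ∑ i ∈ s, f i ^ 2) - 2 * (∑ i ∈ s, f i) ^ 2 := by
  have hin : ∀ i ∈ s, ∑ j ∈ s, (f i - f j) ^ 2 =
      (s.card : ℝ) * f i ^ 2 - 2 * f i * (∑ j ∈ s, f j) + ∑ j ∈ s, f j ^ 2 := by
    intro i _
    calc ∑ j ∈ s, (f i - f j) ^ 2
        = ∑ j ∈ s, (f i ^ 2 - 2 * f i * f j + f j ^ 2) := by
          apply Finset.sum_congr rfl; intros; ring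
      _ = (∑ _j ∈ s, f i ^ 2) - (∑ j ∈ s, 2 * f i * f j) + ∑ j ∈ s, f j ^ 2 := by
          rw [Finset.sum_add_distrib, Finset.sum_sub_distrib]
      _ = (s.card : ℝ) * f i ^ 2 - 2 * f i * (∑ j ∈ s, f j) + ∑ j ∈ s, f j ^ 2 := by
          rw [Finset.sum_const, nsmul_eq_mul, ← Finset.mul_sum]
  rw [Finset.sum_congr rfl hin]
  rw [Finset.sum_add_distrib, Finset.sum_sub_distrib, Finset.sum_const, nsmul_eq_mul,
    ← Finset.mul_sum, ← Finset.sum_mul]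
  have h2 : ∑ i ∈ s, 2 * f i = 2 * ∑ i ∈ s, f i := by rw [Finset.mul_sum]
  rw [h2]
  ring

lemma equality_cond {Δ : ℕ} (hΔ : 2 ≤ Δ) (hdeg : ∀ v, T.childCount v ≤ Δ)
    (heq : ((Δ : ℝ) - 1) * ∑ u ∈ Finset.univ.erase T.root, (T.leafCount u : ℝ) ^ 2 =
      (Fintype.card T.Leaf : ℝ) ^ 2 - Fintype.card T.Leaf) :
    ∀ u, ¬ T.IsLeaf u → T.childCount u = Δ ∧
      ∀ c ∈ T.children u, ∀ c' ∈ T.children u, T.leafCount c = T.leafCount c' := by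
  have hgroup := T.sum_erase_root_eq (fun c => (T.leafCount c : ℝ) ^ 2)
  have hint := T.sum_internal_eq
  -- each internal term is tight
  have hzero : ∑ u ∈ Finset.univ.filter (fun u => ¬ T.IsLeaf u),
      ((Δ : ℝ) * (∑ c ∈ T.children u, (T.leafCount c : ℝ) ^ 2) - (T.leafCount u : ℝ) ^ 2)
      = 0 := by
    rw [Finset.sum_sub_distrib, ← Finset.mul_sum, ← hgroup]
    linarith
  have hterm : ∀ u ∈ Finset.univ.filter (fun u => ¬ T.IsLeaf u),
      (Δ : ℝ) * (∑ c ∈ T.children u, (T.leafCount c : ℝ) ^ 2) = (T.leafCount u : ℝ) ^ 2 := by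
    intro u hu
    have hnn : ∀ w ∈ Finset.univ.filter (fun u => ¬ T.IsLeaf u),
        0 ≤ (Δ : ℝ) * (∑ c ∈ T.children w, (T.leafCount c : ℝ) ^ 2) - (T.leafCount w : ℝ) ^ 2 := by
      intro w hw
      have := T.per_vertex_ineq hdeg (Finset.mem_filter.1 hw).2
      linarith
    have := (Finset.sum_eq_zero_iff_of_nonneg hnn).1 hzero u hu
    linarith
  intro u hu
  have hu' : u ∈ Finset.univ.filter (fun u => ¬ T.IsLeaf u) :=
    Finset.mem_filter.2 ⟨Finset.mem_univ u, hu⟩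
  have ht := hterm u hu'
  have hsum : (T.leafCount u : ℝ) = ∑ c ∈ T.children u, (T.leafCount c : ℝ) := by
    rw [T.leafCount_eq_sum_children hu]; push_cast; rfl
  have hpos : 0 < ∑ c ∈ T.children u, (T.leafCount c : ℝ) ^ 2 := by
    obtain ⟨c, hc⟩ := T.not_isLeaf_iff.1 hu
    apply Finset.sum_pos'
    · intro i _; positivity
    · refine ⟨c, hc, ?_⟩
      have := T.leafCount_pos c
      have h1 : (1 : ℝ) ≤ (T.leafCount c : ℝ) := by exact_mod_cast this
      nlinarith
  have hcs : ((∑ c ∈ T.children u, (T.leafCount c : ℝ)) ^ 2 : ℝ) ≤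
      (T.children u).card * ∑ c ∈ T.children u, (T.leafCount c : ℝ) ^ 2 :=
    sq_sum_le_card_mul_sum_sq
  have hcard : ((T.children u).card : ℝ) ≤ (Δ : ℝ) := by
    have h := hdeg u
    rw [T.childCount_eq] at h
    exact_mod_cast h
  have hkey : ((T.children u).card : ℝ) = (Δ : ℝ) := by
    by_contra hne
    have hlt : ((T.children u).card : ℝ) < Δ := lt_of_le_of_ne hcard hne
    nlinarith [hsum, ht, hcs, hpos]
  constructor
  · rw [childCount_eq]; exact_mod_cast hkey
  · -- Cauchy-Schwarz equality: all leafCounts equal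
    have heq2 : (∑ c ∈ T.children u, (T.leafCount c : ℝ)) ^ 2 =
        (T.children u).card * ∑ c ∈ T.children u, (T.leafCount c : ℝ) ^ 2 := by
      rw [hkey, ← hsum, ← ht]
    -- expand sum of squared differences
    have hdiff : ∑ c ∈ T.children u, ∑ c' ∈ T.children u,
        ((T.leafCount c : ℝ) - (T.leafCount c' : ℝ)) ^ 2 = 0 := by
      rw [TreeOn.sum_sq_diff]
      rw [← heq2]
      ring
    intro c hc c' hc'
    have hnn : ∀ c ∈ T.children u, 0 ≤ ∑ c' ∈ T.children u,
        ((T.leafCount c : ℝ) - (T.leafCount c' : ℝ)) ^ 2 := by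
      intro c _; positivity
    have h1 := (Finset.sum_eq_zero_iff_of_nonneg hnn).1 hdiff c hc
    have hnn2 : ∀ c' ∈ T.children u, 0 ≤ ((T.leafCount c : ℝ) - (T.leafCount c' : ℝ)) ^ 2 := by
      intro c' _; positivity
    have h2 := (Finset.sum_eq_zero_iff_of_nonneg hnn2).1 h1 c' hc'
    have h3 : (T.leafCount c : ℝ) = (T.leafCount c' : ℝ) := by nlinarith [h2]
    exact_mod_cast h3

end TreeOn
open scoped RealInnerProductSpace

namespace TreeOn

variable {V : Type} [Fintype V] [DecidableEq V] (T : TreeOn V)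

lemma nonempty_leaf : Nonempty T.Leaf :=
  ⟨(T.exists_leaf_isAncestor T.root).choose⟩

lemma transpose_ancMatrix : T.ancMatrixᵀ = T.ancMatrix := by
  ext v w
  show T.ancMatrix w v = T.ancMatrix v w
  show ((T.lcaLevel w.1 v.1 : ℕ) : ℝ) = ((T.lcaLevel v.1 w.1 : ℕ) : ℝ)
  rw [T.lcaLevel_comm]

lemma isHermitian_ancMatrix : T.ancMatrix.IsHermitian := by
  show T.ancMatrixᴴ = T.ancMatrix
  ext v w
  simp only [Matrix.conjTranspose_apply, star_trivial]
  show T.ancMatrix w v = T.ancMatrix v w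
  show ((T.lcaLevel w.1 v.1 : ℕ) : ℝ) = ((T.lcaLevel v.1 w.1 : ℕ) : ℝ)
  rw [T.lcaLevel_comm]

lemma dot_mulVec_comm (x y : T.Leaf → ℝ) :
    x ⬝ᵥ (T.ancMatrix *ᵥ y) = (T.ancMatrix *ᵥ x) ⬝ᵥ y := by
  rw [Matrix.dotProduct_mulVec, ← Matrix.mulVec_transpose, T.transpose_ancMatrix]

lemma inner_eq_dot (x y : EuclideanSpace ℝ T.Leaf) : ⟪x, y⟫ = dotProduct x y := by
  simp [PiLp.inner_apply, dotProduct, mul_comm]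

/-- The largest eigenvalue of the ancestral matrix. -/
noncomputable def lamMax : ℝ :=
  Finset.univ.sup' (Finset.univ_nonempty_iff.2 T.nonempty_leaf)
    T.isHermitian_ancMatrix.eigenvalues

lemma eigenvalue_le_lamMax (i : T.Leaf) : T.isHermitian_ancMatrix.eigenvalues i ≤ T.lamMax :=
  Finset.le_sup' _ (Finset.mem_univ i)

lemma specSet_mem_iff {μ : ℝ} :
    (∃ x : T.Leaf → ℝ, x ≠ 0 ∧ T.ancMatrix.mulVec x = μ • x) →
      ∃ i, μ = T.isHermitian_ancMatrix.eigenvalues i := by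
  rintro ⟨x, hx0, hx⟩
  set b := T.isHermitian_ancMatrix.eigenvectorBasis with hb
  have hnz : ∃ i, ⟪b i, (WithLp.toLp 2 x)⟫ ≠ 0 := by
    by_contra hall
    push_neg at hall
    have hrep := b.sum_repr (WithLp.toLp 2 x)
    simp_rw [OrthonormalBasis.repr_apply_apply] at hrep
    simp only [hall, zero_smul, Finset.sum_const_zero] at hrep
    apply hx0
    ext j
    exact congrFun (congrArg (fun z : EuclideanSpace ℝ T.Leaf => (z : T.Leaf → ℝ)) hrep.symm) j
  obtain ⟨i, hi⟩ := hnz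
  set u : T.Leaf → ℝ := ⇑(b i) with hu
  have he : T.ancMatrix *ᵥ u = T.isHermitian_ancMatrix.eigenvalues i • u :=
    T.isHermitian_ancMatrix.mulVec_eigenvectorBasis i
  have hd : u ⬝ᵥ x ≠ 0 := by
    have hh : ⟪b i, (WithLp.toLp 2 x)⟫ = u ⬝ᵥ x := T.inner_eq_dot (b i) (WithLp.toLp 2 x)
    rwa [hh] at hi
  have h1 : u ⬝ᵥ (T.ancMatrix *ᵥ x) = T.isHermitian_ancMatrix.eigenvalues i * (u ⬝ᵥ x) := by
    rw [T.dot_mulVec_comm, he, smul_dotProduct, smul_eq_mul]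
  have h2 : u ⬝ᵥ (T.ancMatrix *ᵥ x) = μ * (u ⬝ᵥ x) := by
    rw [hx, dotProduct_smul, smul_eq_mul]
  exact ⟨i, mul_right_cancel₀ hd (h2.symm.trans h1)⟩

lemma lamMax_mem :
    ∃ x : T.Leaf → ℝ, x ≠ 0 ∧ T.ancMatrix.mulVec x = T.lamMax • x := by
  obtain ⟨i, _, hi⟩ := Finset.exists_mem_eq_sup' (Finset.univ_nonempty_iff.2 T.nonempty_leaf)
    T.isHermitian_ancMatrix.eigenvalues
  refine ⟨⇑(T.isHermitian_ancMatrix.eigenvectorBasis i), ?_, ?_⟩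
  · have h := T.isHermitian_ancMatrix.eigenvectorBasis.orthonormal.ne_zero i
    intro hc
    apply h
    ext j
    exact congrFun hc j
  · have he := T.isHermitian_ancMatrix.mulVec_eigenvectorBasis i
    rw [← hi] at he
    exact he

lemma rhoC_eq_lamMax : T.rhoC = T.lamMax := by
  have hmem := T.lamMax_mem
  have hub : ∀ μ ∈ {μ : ℝ | ∃ x : T.Leaf → ℝ, x ≠ 0 ∧ T.ancMatrix.mulVec x = μ • x},
      μ ≤ T.lamMax := by
    intro μ hμ
    obtain ⟨i, hi⟩ := T.specSet_mem_iff hμ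
    rw [hi]
    exact T.eigenvalue_le_lamMax i
  apply le_antisymm
  · exact csSup_le ⟨T.lamMax, hmem⟩ hub
  · exact le_csSup ⟨T.lamMax, hub⟩ hmem

lemma dot_eigen (i : T.Leaf) (w : T.Leaf → ℝ) :
    (⇑(T.isHermitian_ancMatrix.eigenvectorBasis i) : T.Leaf → ℝ) ⬝ᵥ (T.ancMatrix *ᵥ w) =
      T.isHermitian_ancMatrix.eigenvalues i *
        ((⇑(T.isHermitian_ancMatrix.eigenvectorBasis i) : T.Leaf → ℝ) ⬝ᵥ w) := by
  rw [T.dot_mulVec_comm, T.isHermitian_ancMatrix.mulVec_eigenvectorBasis i,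
    smul_dotProduct, smul_eq_mul]

lemma rayleigh_le (y : EuclideanSpace ℝ T.Leaf) :
    dotProduct y (T.ancMatrix *ᵥ y) ≤ T.lamMax * dotProduct y y := by
  set b := T.isHermitian_ancMatrix.eigenvectorBasis with hb
  have h1 : dotProduct y (T.ancMatrix *ᵥ y) =
      ⟪y, (WithLp.toLp 2 (T.ancMatrix *ᵥ y))⟫ :=
    (T.inner_eq_dot y (WithLp.toLp 2 (T.ancMatrix *ᵥ y))).symm
  have h2 := (b.sum_inner_mul_inner y (WithLp.toLp 2 (T.ancMatrix *ᵥ y))).symm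
  have h3 : ∀ i, ⟪b i, (WithLp.toLp 2 (T.ancMatrix *ᵥ y))⟫ =
      T.isHermitian_ancMatrix.eigenvalues i * ⟪b i, y⟫ := by
    intro i
    have d1 : ⟪b i, (WithLp.toLp 2 (T.ancMatrix *ᵥ y))⟫ =
        dotProduct (b i) (WithLp.toLp 2 (T.ancMatrix *ᵥ y)) :=
      T.inner_eq_dot _ _
    have d2 : ⟪b i, y⟫ = dotProduct (b i) y := T.inner_eq_dot _ _
    rw [d1, d2]
    exact T.dot_eigen i y
  have h4 : ∑ i, ⟪y, b i⟫ * ⟪b i, (WithLp.toLp 2 (T.ancMatrix *ᵥ y))⟫ ≤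
      T.lamMax * ∑ i, ⟪y, b i⟫ * ⟪b i, y⟫ := by
    rw [Finset.mul_sum]
    apply Finset.sum_le_sum
    intro i _
    rw [h3 i, real_inner_comm y (b i)]
    have hnn : (0:ℝ) ≤ ⟪b i, y⟫ * ⟪b i, y⟫ := mul_self_nonneg _
    nlinarith [T.eigenvalue_le_lamMax i]
  have h5 := b.sum_inner_mul_inner y y
  have h6 : ⟪y, y⟫ = dotProduct y y := T.inner_eq_dot _ _
  rw [h1, h2]
  rw [h5, h6] at h4
  exact h4

end TreeOn
namespace TreeOn

variable {V : Type} [Fintype V] [DecidableEq V] (T : TreeOn V)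

lemma leafCount_eq_mul {Δ : ℕ} {u : V} (hleaf : ¬ T.IsLeaf u)
    (hcard : T.childCount u = Δ)
    (hconst : ∀ c ∈ T.children u, ∀ c' ∈ T.children u, T.leafCount c = T.leafCount c')
    {c0 : V} (hc0 : c0 ∈ T.children u) :
    T.leafCount u = Δ * T.leafCount c0 := by
  rw [T.leafCount_eq_sum_children hleaf]
  rw [Finset.sum_congr rfl fun c hc => hconst c hc c0 hc0]
  rw [Finset.sum_const, smul_eq_mul, ← T.childCount_eq, hcard]

lemma uniform_depth {Δ : ℕ} (hΔ : 2 ≤ Δ)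
    (hreg : ∀ u, ¬ T.IsLeaf u → T.childCount u = Δ ∧
      ∀ c ∈ T.children u, ∀ c' ∈ T.children u, T.leafCount c = T.leafCount c') :
    ∀ N, ∀ u : V, T.leafCount u ≤ N →
      ∃ h : ℕ, Δ ^ h = T.leafCount u ∧
        ∀ v : T.Leaf, T.IsAncestor u v.1 → T.level v.1 = T.level u + h := by
  intro N
  induction N with
  | zero =>
    intro u hu
    have := T.leafCount_pos u
    omega
  | succ n ih =>
    intro u hu
    by_cases hleaf : T.IsLeaf u
    · refine ⟨0, by simp [T.leafCount_of_isLeaf hleaf], ?_⟩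
      intro v hv
      rw [T.eq_of_isAncestor_of_isLeaf hleaf hv]
      omega
    · obtain ⟨hcard, hconst⟩ := hreg u hleaf
      obtain ⟨c0, hc0⟩ := T.not_isLeaf_iff.1 hleaf
      have hmul := T.leafCount_eq_mul hleaf hcard hconst hc0
      have ha1 : 1 ≤ T.leafCount c0 := T.leafCount_pos c0
      have h2a : 2 * T.leafCount c0 ≤ Δ * T.leafCount c0 := Nat.mul_le_mul_right _ hΔ
      obtain ⟨h0, hpow0, hlev0⟩ := ih c0 (by omega)
      refine ⟨h0 + 1, ?_, ?_⟩
      · rw [pow_succ, hpow0, hmul, Nat.mul_comm]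
      · intro v hv
        have hvne : v.1 ≠ u := fun he => hleaf (he ▸ v.2)
        obtain ⟨c, hc, hcv⟩ := T.exists_child_isAncestor hv hvne
        have hlc : T.leafCount c = T.leafCount c0 := hconst c hc c0 hc0
        obtain ⟨h1, hpow1, hlev1⟩ := ih c (by omega)
        have hpows : Δ ^ h1 = Δ ^ h0 := by rw [hpow1, hpow0, hlc]
        have hh : h1 = h0 := Nat.pow_right_injective hΔ hpows
        rw [hlev1 v hcv, T.level_child hc, hh]
        omega

lemma level_const_of_regular {Δ : ℕ} (hΔ : 2 ≤ Δ)
    (hreg : ∀ u, ¬ T.IsLeaf u → T.childCount u = Δ ∧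
      ∀ c ∈ T.children u, ∀ c' ∈ T.children u, T.leafCount c = T.leafCount c') :
    ∀ v w : T.Leaf, T.level v.1 = T.level w.1 := by
  obtain ⟨h, _, hlev⟩ := T.uniform_depth hΔ hreg (T.leafCount T.root) T.root le_rfl
  intro v w
  rw [hlev v (T.isAncestor_root v.1), hlev w (T.isAncestor_root w.1)]

lemma level_le_of_complete {Δ : ℕ} (hcomp : T.IsCompleteDary Δ) (v0 : T.Leaf) (u : V) :
    T.level u ≤ T.level v0.1 := by
  obtain ⟨w, hw⟩ := T.exists_leaf_isAncestor u
  have h := T.level_le_of_isAncestor hw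
  rwa [hcomp.2 w v0] at h

lemma leafCount_of_complete {Δ : ℕ} (hΔ : 2 ≤ Δ) (hcomp : T.IsCompleteDary Δ) (v0 : T.Leaf) :
    ∀ u : V, T.leafCount u = Δ ^ (T.level v0.1 - T.level u) := by
  suffices H : ∀ m, ∀ u : V, T.level v0.1 - T.level u ≤ m →
      T.leafCount u = Δ ^ (T.level v0.1 - T.level u) by
    intro u
    exact H _ u le_rfl
  intro m
  induction m with
  | zero =>
    intro u hu
    have hle := T.level_le_of_complete hcomp v0 u
    have hlev : T.level u = T.level v0.1 := by omega
    by_cases hleaf : T.IsLeaf u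
    · rw [T.leafCount_of_isLeaf hleaf, hlev]
      simp
    · obtain ⟨c, hc⟩ := T.not_isLeaf_iff.1 hleaf
      have := T.level_child hc
      have := T.level_le_of_complete hcomp v0 c
      omega
  | succ n ih =>
    intro u hu
    by_cases hleaf : T.IsLeaf u
    · have hlev : T.level u = T.level v0.1 := hcomp.2 ⟨u, hleaf⟩ v0
      rw [T.leafCount_of_isLeaf hleaf, hlev]
      simp
    · obtain ⟨c1, hc1⟩ := T.not_isLeaf_iff.1 hleaf
      have hlt : T.level u < T.level v0.1 := by
        have := T.level_child hc1
        have := T.level_le_of_complete hcomp v0 c1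
        omega
      rw [T.leafCount_eq_sum_children hleaf]
      have hchild : ∀ c ∈ T.children u, T.leafCount c =
          Δ ^ (T.level v0.1 - T.level u - 1) := by
        intro c hc
        have hlc := T.level_child hc
        have h9 := ih c (by omega)
        have h10 : T.level v0.1 - (T.level u + 1) = T.level v0.1 - T.level u - 1 := by omega
        rw [h9, hlc, h10]
      rw [Finset.sum_congr rfl hchild, Finset.sum_const, smul_eq_mul, ← T.childCount_eq,
        hcomp.1 u hleaf]
      rw [← pow_succ']
      congr 1
      omega

lemma rowsum_nat_complete {Δ : ℕ} (hΔ : 2 ≤ Δ) (hcomp : T.IsCompleteDary Δ) (v : T.Leaf) :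
    ∑ w : T.Leaf, T.lcaLevel v.1 w.1 = ∑ i ∈ Finset.range (T.level v.1), Δ ^ i := by
  -- step 1: row sum = sum of leafCounts over proper ancestors of v
  have h1 : ∀ w : T.Leaf, T.lcaLevel v.1 w.1 = ∑ u ∈ Finset.univ.erase T.root,
      (if T.IsAncestor u v.1 ∧ T.IsAncestor u w.1 then 1 else 0) :=
    fun w => T.lcaLevel_eq_sum v.1 w.1
  rw [Finset.sum_congr rfl fun w _ => h1 w, Finset.sum_comm]
  have h2 : ∀ u ∈ Finset.univ.erase T.root,
      (∑ w : T.Leaf, if T.IsAncestor u v.1 ∧ T.IsAncestor u w.1 then 1 else 0) =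
        (if T.IsAncestor u v.1 then T.leafCount u else 0) := by
    intro u _
    by_cases hu : T.IsAncestor u v.1
    · simp only [hu, true_and, if_true]
      rw [leafCount, Finset.card_filter]
    · simp [hu]
  rw [Finset.sum_congr rfl h2, Finset.sum_ite, Finset.sum_const_zero, add_zero]
  have h3 : (Finset.univ.erase T.root).filter (fun u => T.IsAncestor u v.1) =
      (T.commonAnc v.1 v.1).erase T.root := by
    apply Finset.ext
    intro u
    simp [mem_commonAnc, Finset.mem_erase, and_comm, and_left_comm, and_self]
  rw [h3]
  -- step 2: each proper ancestor u contributes Δ ^ (level v - level u)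
  have h4 : ∀ u ∈ (T.commonAnc v.1 v.1).erase T.root,
      T.leafCount u = Δ ^ (T.level v.1 - T.level u) :=
    fun u _ => T.leafCount_of_complete hΔ hcomp v u
  rw [Finset.sum_congr rfl h4]
  -- step 3: reindex by level
  have hinj : ∀ a ∈ (T.commonAnc v.1 v.1).erase T.root,
      ∀ b ∈ (T.commonAnc v.1 v.1).erase T.root, T.level a = T.level b → a = b := by
    intro a ha b hb hab
    exact T.level_injOn_commonAnc v.1 v.1 (Finset.mem_of_mem_erase ha)
      (Finset.mem_of_mem_erase hb) hab
  rw [show (∑ x ∈ (T.commonAnc v.1 v.1).erase T.root, Δ ^ (T.level v.1 - T.level x)) =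
      ∑ j ∈ ((T.commonAnc v.1 v.1).erase T.root).image T.level, Δ ^ (T.level v.1 - j) from
    (Finset.sum_image (f := fun j => Δ ^ (T.level v.1 - j)) hinj).symm]
  have h5 : ((T.commonAnc v.1 v.1).erase T.root).image T.level =
      (Finset.range (T.level v.1 + 1)).erase 0 := by
    apply Finset.ext
    intro j
    simp only [Finset.mem_image, Finset.mem_erase, Finset.mem_range, Nat.lt_succ_iff]
    constructor
    · rintro ⟨u, ⟨hune, humem⟩, rfl⟩
      refine ⟨?_, ?_⟩
      · intro h0
        exact hune (T.level_eq_zero_iff.1 h0)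
      · have := T.level_le_lcaLevel humem
        rwa [T.lcaLevel_self] at this
    · rintro ⟨hj0, hj⟩
      have : j ∈ (T.commonAnc v.1 v.1).image T.level := by
        rw [T.image_level_commonAnc, Finset.mem_range, T.lcaLevel_self]
        omega
      obtain ⟨u, hu, hul⟩ := Finset.mem_image.1 this
      refine ⟨u, ⟨?_, hu⟩, hul⟩
      intro hroot
      subst hroot
      rw [T.level_root] at hul
      exact hj0 hul.symm
  rw [h5]
  -- step 4: compute the sum over (range (h+1)).erase 0
  have h6 : (Finset.range (T.level v.1 + 1)).erase 0 =
      (Finset.range (T.level v.1)).image Nat.succ := by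
    apply Finset.ext
    intro j
    simp only [Finset.mem_erase, Finset.mem_range, Finset.mem_image, Nat.lt_succ_iff]
    constructor
    · rintro ⟨h0, hle⟩
      exact ⟨j - 1, by omega, by omega⟩
    · rintro ⟨k, hk, rfl⟩
      omega
  rw [h6, Finset.sum_image (by intro a _ b _ h; omega)]
  have h7 : ∀ j ∈ Finset.range (T.level v.1),
      Δ ^ (T.level v.1 - Nat.succ j) = Δ ^ (T.level v.1 - 1 - j) := by
    intro j _
    congr 1
    omega
  rw [Finset.sum_congr rfl h7, Finset.sum_range_reflect (fun i => Δ ^ i) (T.level v.1)]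

end TreeOn
namespace TreeOn

variable {V : Type} [Fintype V] [DecidableEq V] (T : TreeOn V)

lemma ancMatrix_nonneg (v w : T.Leaf) : 0 ≤ T.ancMatrix v w := by
  show (0:ℝ) ≤ ((T.lcaLevel v.1 w.1 : ℕ) : ℝ)
  exact Nat.cast_nonneg _

lemma rhoC_le_of_rowsum {r : ℝ} (hrow : ∀ v : T.Leaf, ∑ w, T.ancMatrix v w = r) :
    T.rhoC ≤ r := by
  have hne := T.nonempty_leaf
  apply csSup_le ⟨T.lamMax, T.lamMax_mem⟩
  rintro μ ⟨x, hx0, hx⟩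
  obtain ⟨i, _, hmax⟩ := Finset.exists_max_image Finset.univ (fun j => |x j|)
    (Finset.univ_nonempty_iff.2 hne)
  have hxj : ∃ j, x j ≠ 0 := by
    by_contra hall
    push_neg at hall
    exact hx0 (funext hall)
  obtain ⟨j, hj⟩ := hxj
  have hxi : 0 < |x i| := lt_of_lt_of_le (abs_pos.2 hj) (hmax j (Finset.mem_univ j))
  have hmu : μ * x i = ∑ w, T.ancMatrix i w * x w := by
    have h := congrFun hx i
    simp only [Matrix.mulVec, dotProduct, Pi.smul_apply, smul_eq_mul] at h
    exact h.symm
  have habs : |μ| * |x i| ≤ r * |x i| := by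
    rw [← abs_mul, hmu]
    calc |∑ w, T.ancMatrix i w * x w| ≤ ∑ w, |T.ancMatrix i w * x w| :=
          Finset.abs_sum_le_sum_abs _ _
      _ ≤ ∑ w, T.ancMatrix i w * |x i| := by
          apply Finset.sum_le_sum
          intro w _
          rw [abs_mul, abs_of_nonneg (T.ancMatrix_nonneg i w)]
          exact mul_le_mul_of_nonneg_left (hmax w (Finset.mem_univ w))
            (T.ancMatrix_nonneg i w)
      _ = (∑ w, T.ancMatrix i w) * |x i| := by rw [Finset.sum_mul]
      _ = r * |x i| := by rw [hrow i]
  exact (le_abs_self μ).trans (le_of_mul_le_mul_right habs hxi)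

end TreeOn

/-- If every vertex of `T` has at most `Δ ≥ 2` children, then
`ρ_C(T) ≥ (L(T) − 1)/(Δ − 1)`, with equality iff `T` is a complete `Δ`-ary
tree. -/
theorem rhoC_ge_of_outdegree_le
    {V : Type} [Fintype V] [DecidableEq V] (T : TreeOn V) (Δ : ℕ)
    (hΔ : 2 ≤ Δ) (hdeg : ∀ v, T.childCount v ≤ Δ) :
    ((Fintype.card T.Leaf : ℝ) - 1) / ((Δ : ℝ) - 1) ≤ T.rhoC ∧
      (T.rhoC = ((Fintype.card T.Leaf : ℝ) - 1) / ((Δ : ℝ) - 1) ↔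
        T.IsCompleteDary Δ) := by
  classical
  have hne := T.nonempty_leaf
  have hL1 : (1:ℝ) ≤ (Fintype.card T.Leaf : ℝ) := by
    have : 0 < Fintype.card T.Leaf := @Fintype.card_pos _ _ hne
    exact_mod_cast this
  have hΔ2 : (2:ℝ) ≤ (Δ:ℝ) := by exact_mod_cast hΔ
  have hΔ1 : (1:ℝ) < (Δ:ℝ) := by linarith
  -- Rayleigh quotient at the all-ones vector
  have hones : (fun _ : T.Leaf => (1:ℝ)) ⬝ᵥ (T.ancMatrix *ᵥ fun _ => (1:ℝ)) =
      ∑ u ∈ Finset.univ.erase T.root, (T.leafCount u : ℝ) ^ 2 := by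
    rw [← T.sum_sum_ancMatrix]
    simp [dotProduct, Matrix.mulVec]
  have honesdot : (fun _ : T.Leaf => (1:ℝ)) ⬝ᵥ (fun _ : T.Leaf => (1:ℝ)) =
      (Fintype.card T.Leaf : ℝ) := by
    simp [dotProduct]
  have hray : (fun _ : T.Leaf => (1:ℝ)) ⬝ᵥ (T.ancMatrix *ᵥ fun _ => (1:ℝ)) ≤
      T.lamMax * ((fun _ : T.Leaf => (1:ℝ)) ⬝ᵥ (fun _ : T.Leaf => (1:ℝ))) :=
    T.rayleigh_le (WithLp.toLp 2 (fun _ => (1:ℝ)))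
  rw [hones, honesdot] at hray
  have hmain := T.main_lower_bound hΔ hdeg
  have hrho := T.rhoC_eq_lamMax
  have hlow : ((Fintype.card T.Leaf : ℝ) - 1) / ((Δ : ℝ) - 1) ≤ T.rhoC := by
    rw [hrho, div_le_iff₀ (by linarith)]
    have h1 : ((Δ:ℝ)-1) * (∑ u ∈ Finset.univ.erase T.root, (T.leafCount u : ℝ) ^ 2) ≤
        ((Δ:ℝ)-1) * (T.lamMax * (Fintype.card T.Leaf : ℝ)) :=
      mul_le_mul_of_nonneg_left hray (by linarith)
    have hLpos : (0:ℝ) < (Fintype.card T.Leaf : ℝ) := by linarith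
    nlinarith
  refine ⟨hlow, ?_, ?_⟩
  · -- equality implies complete Δ-ary
    intro heq
    have hlam : T.lamMax = ((Fintype.card T.Leaf : ℝ) - 1) / ((Δ : ℝ) - 1) := by
      rw [← hrho, heq]
    rw [hlam] at hray
    have hexact : ((Δ:ℝ)-1) * ∑ u ∈ Finset.univ.erase T.root, (T.leafCount u : ℝ) ^ 2 =
        (Fintype.card T.Leaf : ℝ) ^ 2 - (Fintype.card T.Leaf : ℝ) := by
      have hd : (0:ℝ) < (Δ:ℝ) - 1 := by linarith
      have hup : ((Δ:ℝ)-1) * (∑ u ∈ Finset.univ.erase T.root, (T.leafCount u : ℝ) ^ 2) ≤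
          (Fintype.card T.Leaf : ℝ) ^ 2 - (Fintype.card T.Leaf : ℝ) := by
        have h2 : ((Δ:ℝ)-1) * (∑ u ∈ Finset.univ.erase T.root, (T.leafCount u : ℝ) ^ 2) ≤
            ((Δ:ℝ)-1) * (((Fintype.card T.Leaf : ℝ) - 1) / ((Δ : ℝ) - 1) *
              (Fintype.card T.Leaf : ℝ)) :=
          mul_le_mul_of_nonneg_left hray (le_of_lt hd)
        have h3 : ((Δ:ℝ)-1) * (((Fintype.card T.Leaf : ℝ) - 1) / ((Δ : ℝ) - 1) *
            (Fintype.card T.Leaf : ℝ)) =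
            ((Fintype.card T.Leaf : ℝ) - 1) * (Fintype.card T.Leaf : ℝ) := by
          field_simp
        nlinarith
      linarith
    have hreg := T.equality_cond hΔ hdeg hexact
    exact ⟨fun u hu => (hreg u hu).1, T.level_const_of_regular hΔ hreg⟩
  · -- complete Δ-ary implies equality
    intro hcomp
    have hrowsum : ∀ v : T.Leaf, ∑ w, T.ancMatrix v w =
        ((Fintype.card T.Leaf : ℝ) - 1) / ((Δ : ℝ) - 1) := by
      intro v
      have hnat := T.rowsum_nat_complete hΔ hcomp v
      have hcast : ∑ w : T.Leaf, T.ancMatrix v w =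
          ∑ w : T.Leaf, ((T.lcaLevel v.1 w.1 : ℕ) : ℝ) := rfl
      rw [hcast, ← Nat.cast_sum, hnat]
      push_cast
      rw [geom_sum_eq (ne_of_gt hΔ1)]
      have hLpow : (Fintype.card T.Leaf : ℝ) = (Δ:ℝ) ^ (T.level v.1) := by
        have h := T.leafCount_of_complete hΔ hcomp v T.root
        rw [T.level_root, Nat.sub_zero, T.leafCount_root] at h
        exact_mod_cast h
      rw [hLpow]
    exact le_antisymm (T.rhoC_le_of_rowsum hrowsum) hlow
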